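/- Let d be an even positive integer and 0 ≤ k ≤ d. Then the coefficient of z^{d/2} in (1 − z)^k (1 + z)^{d−k} equals (−1)^{k/2}·C(d, d/2)·C(d/2, k/2)/C(d, k) if k is even, and equals 0 if k is odd. Here C(n,m) denotes the binomial coefficient. -/

import Mathlib

open Polynomial

namespace MiddleCoeffAux

noncomputable def f (d k : ℕ) : ℚ[X] := (1 - X)^k * (1 + X)^(d - k)

lemma ndeg_sub (a : ℕ) : ((1 - X : ℚ[X])^a).natDegree ≤ a := by
  apply natDegree_pow_le.trans
  have : natDegree (1 - X : ℚ[X]) ≤ 1 := by compute_degree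
  nlinarith [this]

lemma ndeg_add (a : ℕ) : ((1 + X : ℚ[X])^a).natDegree ≤ a := by
  apply natDegree_pow_le.trans
  have : natDegree (1 + X : ℚ[X]) ≤ 1 := by compute_degree
  nlinarith [this]

lemma reflect_X1 : (X : ℚ[X]).reflect 1 = 1 := by
  have := reflect_monomial 1 1 (R := ℚ)
  simp only [pow_one] at this
  rw [this, revAt_le (le_refl 1)]; simp

lemma reflect_sub_pow (a : ℕ) : ((1 - X : ℚ[X])^a).reflect a = (X - 1)^a := by
  induction a with
  | zero => simp [reflect_one]
  | succ n ih =>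
    rw [pow_succ, pow_succ, reflect_mul _ _ (ndeg_sub n) (by compute_degree), ih]
    congr 1
    rw [reflect_sub, reflect_one, reflect_X1]
    simp

lemma reflect_add_pow (a : ℕ) : ((1 + X : ℚ[X])^a).reflect a = (X + 1)^a := by
  induction a with
  | zero => simp [reflect_one]
  | succ n ih =>
    rw [pow_succ, pow_succ, reflect_mul _ _ (ndeg_add n) (by compute_degree), ih]
    congr 1
    rw [reflect_add, reflect_one, reflect_X1]
    simp

lemma reflect_f (d k : ℕ) (hk : k ≤ d) :
    (f d k).reflect d = C ((-1 : ℚ)^k) * f d k := by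
  have hd : k + (d - k) = d := Nat.add_sub_cancel' hk
  have h0 : (f d k).reflect d
      = ((1 - X : ℚ[X])^k).reflect k * ((1 + X : ℚ[X])^(d-k)).reflect (d-k) := by
    rw [f, ← reflect_mul _ _ (ndeg_sub k) (ndeg_add (d-k)), hd]
  rw [h0, reflect_sub_pow, reflect_add_pow]
  have h1 : ((X : ℚ[X]) - 1)^k = C ((-1:ℚ)^k) * (1 - X)^k := by
    rw [map_pow, map_neg, map_one, ← neg_pow, neg_sub]
  have h2 : ((X : ℚ[X]) + 1)^(d-k) = (1 + X)^(d-k) := by ring_nf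
  rw [h1, h2, f]; ring

lemma coeff_symm (d k i : ℕ) (hk : k ≤ d) (hi : i ≤ d) :
    (f d k).coeff (d - i) = (-1 : ℚ)^k * (f d k).coeff i := by
  have := congrArg (fun p => Polynomial.coeff p i) (reflect_f d k hk)
  simp only [coeff_reflect, revAt_le hi, coeff_C_mul] at this
  exact this

lemma ode (a b : ℕ) :
    (1 - X^2) * derivative ((1 - X)^a * (1 + X)^b : ℚ[X]) =
    (C ((b:ℚ) - a) - C ((a:ℚ) + b) * X) * ((1 - X)^a * (1 + X)^b) := by
  have hC : ∀ x y : ℚ, (C (x - y) : ℚ[X]) = C x - C y := by simp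
  rcases a with _|a <;> rcases b with _|b <;>
    simp only [derivative_mul, derivative_pow, derivative_sub, derivative_add,
      derivative_one, derivative_X, pow_zero, Nat.cast_zero, Nat.cast_succ,
      zero_sub, sub_zero, add_zero, zero_add, Nat.add_sub_cancel, hC, map_add,
      map_neg, map_one, map_natCast, C_1, mul_one, mul_zero, zero_mul,
      one_mul, map_zero] <;>
    (try rw [pow_succ ((1:ℚ[X]) - X)]) <;> (try rw [pow_succ ((1:ℚ[X]) + X)]) <;> ring

lemma extract (p : ℚ[X]) (α β : ℚ)
    (h : (1 - X^2) * derivative p = (C α - C β * X) * p) (M : ℕ) :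
    ((M:ℚ)+2) * p.coeff (M+2) - (M:ℚ) * p.coeff M
      = α * p.coeff (M+1) - β * p.coeff M := by
  have h2 := congrArg (fun q => Polynomial.coeff q (M+1)) h
  simp only [sub_mul, one_mul, coeff_sub, coeff_C_mul, mul_assoc,
    coeff_derivative, coeff_X_mul] at h2
  have hx : ((X:ℚ[X])^2 * derivative p).coeff (M+1) = (M:ℚ) * p.coeff M := by
    cases M with
    | zero => simp [coeff_X_pow_mul']
    | succ M' =>
      have h3 : ((X:ℚ[X])^2 * derivative p).coeff (M' + 1 + 1)
          = (derivative p).coeff M' := by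
        have := coeff_X_pow_mul (derivative p) 2 M'
        simpa [show M' + 2 = M' + 1 + 1 by ring] using this
      rw [h3, coeff_derivative]
      push_cast; ring
  rw [hx] at h2
  push_cast at h2 ⊢
  have he : M + 1 + 1 = M + 2 := by ring
  rw [he] at h2
  linarith [h2]

lemma ode_f (d k : ℕ) (hk : k ≤ d) :
    (1 - X^2) * derivative (f d k) =
    (C ((d:ℚ) - 2*k) - C (d:ℚ) * X) * f d k := by
  have := ode k (d - k)
  rw [f]
  have h1 : ((d - k : ℕ) : ℚ) - k = (d:ℚ) - 2*k := by
    rw [Nat.cast_sub hk]; ring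
  have h2 : (k:ℚ) + ((d - k : ℕ) : ℚ) = (d:ℚ) := by
    rw [Nat.cast_sub hk]; ring
  rw [h1, h2] at this
  exact this

lemma pascal (d k : ℕ) (hk : k < d) :
    (1 + X) * f d (k+1) = (1 - X) * f d k := by
  rw [f, f]
  have h1 : d - k = (d - (k+1)) + 1 := by omega
  rw [h1, pow_succ ((1:ℚ[X]) - X) k, pow_succ ((1:ℚ[X]) + X) (d - (k+1))]
  ring

lemma odd_coeff (M k : ℕ) (hk : k ≤ 2*(M+1)) (hodd : ¬ Even k) :
    (f (2*(M+1)) k).coeff (M+1) = 0 := by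
  have hs := coeff_symm (2*(M+1)) k (M+1) hk (by omega)
  have hi : 2*(M+1) - (M+1) = M+1 := by omega
  rw [hi, Odd.neg_one_pow (Nat.not_even_iff_odd.mp hodd)] at hs
  linarith [hs]

lemma evenB (M k : ℕ) (hk : k ≤ 2*(M+1)) (he : Even k) :
    ((2*(M+1):ℕ):ℚ) * (f (2*(M+1)) k).coeff M + 2 * (f (2*(M+1)) k).coeff M
      = (((2*(M+1):ℕ):ℚ) - 2*k) * (f (2*(M+1)) k).coeff (M+1) := by
  set d := 2*(M+1) with hd
  have hodeq := extract (f d k) ((d:ℚ) - 2*k) (d:ℚ) (ode_f d k hk) M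
  have hsym : (f d k).coeff (M+2) = (f d k).coeff M := by
    have := coeff_symm d k M hk (by omega)
    have hi : d - M = M + 2 := by omega
    rw [hi] at this
    rw [this, Even.neg_one_pow he, one_mul]
  rw [hsym] at hodeq
  push_cast at hodeq ⊢
  linarith [hodeq]

lemma recur (M k : ℕ) (hk : k + 2 ≤ 2*(M+1)) (he : Even k) :
    (((2*(M+1):ℕ):ℚ) - k - 1) * (f (2*(M+1)) (k+2)).coeff (M+1)
      = -((k:ℚ)+1) * (f (2*(M+1)) k).coeff (M+1) := by
  set d := 2*(M+1) with hd
  have hA1 : (f d (k+1)).coeff (M+1) = 0 :=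
    odd_coeff M (k+1) (by omega) (by simp [Nat.even_add_one, he])
  -- pascal at k, coeff (M+1)
  have hp1 := congrArg (fun p => Polynomial.coeff p (M+1)) (pascal d k (by omega))
  have hp2 := congrArg (fun p => Polynomial.coeff p (M+1)) (pascal d (k+1) (by omega))
  simp only [add_mul, sub_mul, one_mul, coeff_add, coeff_sub, coeff_X_mul] at hp1 hp2
  have hBk := evenB M k (by omega) he
  have hB2 := evenB M (k+2) (by omega) (by exact he.add (by decide))
  rw [hA1] at hp1 hp2
  push_cast at hBk hB2 ⊢
  set A := (f d k).coeff (M+1)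
  set B := (f d k).coeff M
  set A2 := (f d (k+2)).coeff (M+1)
  set B2 := (f d (k+2)).coeff M
  set C1 := (f d (k+1)).coeff M
  have hdq : ((d:ℕ):ℚ) = 2*(M:ℚ)+2 := by rw [hd]; push_cast; ring
  rw [hdq]
  linear_combination ((2*(M:ℚ)+4)*(hp2 - hp1) - hB2 + hBk)/2

lemma formula (M t : ℕ) (ht : 2*t ≤ 2*(M+1)) :
    (f (2*(M+1)) (2*t)).coeff (M+1)
      = (-1:ℚ)^t * ((2*(M+1)).choose (M+1) : ℚ) * ((M+1).choose t : ℚ)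
          / ((2*(M+1)).choose (2*t) : ℚ) := by
  set d := 2*(M+1) with hd
  induction t with
  | zero =>
    simp [f, coeff_one_add_X_pow]
  | succ t ih =>
    have ih' := ih (by omega)
    have hrec := recur M (2*t) (by omega) (even_two_mul t)
    have h2 : 2*(t+1) = 2*t+2 := by ring
    rw [h2]
    have htM : (t:ℚ) ≤ M := by exact_mod_cast (by omega : t ≤ M)
    have hne : (2*(M:ℚ)+2) - 2*t - 1 ≠ 0 := by nlinarith [htM]
    have hne5 : (2*(M:ℚ)+2) - 2*t ≠ 0 := by nlinarith [htM]
    have hp1 : ((2:ℚ)*t+1) ≠ 0 := by positivity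
    have hp2 : ((2:ℚ)*t+2) ≠ 0 := by positivity
    have hp3 : ((t:ℚ)+1) ≠ 0 := by positivity
    have n1 : (d.choose (2*t):ℚ) ≠ 0 :=
      Nat.cast_ne_zero.mpr (Nat.choose_pos (by omega)).ne'
    have hdq : ((d:ℕ):ℚ) = 2*(M:ℚ)+2 := by rw [hd]; push_cast; ring
    have hA2 : (f d (2*t+2)).coeff (M+1)
        = -((2*t:ℚ)+1) * (f d (2*t)).coeff (M+1) / ((2*(M:ℚ)+2) - 2*t - 1) := by
      rw [eq_div_iff hne]
      push_cast at hrec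
      linear_combination hrec
    have e1 : (d.choose (2*t+1):ℚ) = (d.choose (2*t):ℚ) * ((2*(M:ℚ)+2) - 2*t) / (2*(t:ℚ)+1) := by
      rw [eq_div_iff hp1]
      have h := Nat.choose_succ_right_eq d (2*t)
      have hc : ((d.choose (2*t) * (d - 2*t) : ℕ) : ℚ)
          = (d.choose (2*t):ℚ) * ((2*(M:ℚ)+2) - 2*t) := by
        push_cast [Nat.cast_sub (by omega : 2*t ≤ d), hdq]; ring
      rw [← hc, ← h]; push_cast; ring
    have e2 : (d.choose (2*t+2):ℚ) = (d.choose (2*t+1):ℚ) * ((2*(M:ℚ)+2) - 2*t - 1) / (2*(t:ℚ)+2) := by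
      rw [eq_div_iff hp2]
      have h := Nat.choose_succ_right_eq d (2*t+1)
      have hc : ((d.choose (2*t+1) * (d - (2*t+1)) : ℕ) : ℚ)
          = (d.choose (2*t+1):ℚ) * ((2*(M:ℚ)+2) - 2*t - 1) := by
        push_cast [Nat.cast_sub (by omega : 2*t+1 ≤ d), hdq]; ring
      have h22 : 2*t+1+1 = 2*t+2 := by ring
      rw [h22] at h
      rw [← hc, ← h]; push_cast; ring
    have e3 : (((M+1).choose (t+1)):ℚ) = ((M+1).choose t:ℚ) * (((M:ℚ)+1) - t) / ((t:ℚ)+1) := by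
      rw [eq_div_iff hp3]
      have h := Nat.choose_succ_right_eq (M+1) t
      have hc : (((M+1).choose t * (M+1 - t) : ℕ) : ℚ)
          = ((M+1).choose t:ℚ) * (((M:ℚ)+1) - t) := by
        push_cast [Nat.cast_sub (by omega : t ≤ M+1)]; ring
      rw [← hc, ← h]; push_cast; ring
    rw [hA2, ih', e2, e1, e3, pow_succ]
    have hne6 : ((M:ℚ)+1) - t ≠ 0 := by nlinarith [htM]
    field_simp

end MiddleCoeffAux

/-- The middle coefficient of `(1-z)^k (1+z)^{d-k}` for even `d`:
it is `(-1)^{k/2} C(d,d/2) C(d/2,k/2) / C(d,k)` when `k` is even, and `0` when `k` is odd. -/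
theorem middle_coeff_one_sub_one_add (d k : ℕ) (hd : Even d) (hd0 : 0 < d) (hk : k ≤ d) :
    ((1 - Polynomial.X) ^ k * (1 + Polynomial.X) ^ (d - k) : Polynomial ℚ).coeff (d / 2) =
    if Even k then
      (-1 : ℚ) ^ (k / 2) * (d.choose (d / 2) : ℚ) * ((d / 2).choose (k / 2) : ℚ) /
        (d.choose k : ℚ)
    else 0 := by
  obtain ⟨m, rfl⟩ : ∃ m, d = 2 * m := by
    obtain ⟨r, hr⟩ := hd; exact ⟨r, by omega⟩
  obtain ⟨M, rfl⟩ : ∃ M, m = M + 1 := ⟨m - 1, by omega⟩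
  have hdiv : 2 * (M + 1) / 2 = M + 1 := by omega
  rw [hdiv]
  by_cases he : Even k
  · rw [if_pos he]
    obtain ⟨t, rfl⟩ : ∃ t, k = 2 * t := by
      obtain ⟨r, hr⟩ := he; exact ⟨r, by omega⟩
    have hkt : 2 * t / 2 = t := by omega
    rw [hkt]
    exact MiddleCoeffAux.formula M t hk
  · rw [if_neg he]
    exact MiddleCoeffAux.odd_coeff M k hk he
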